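/- Let A be a locally finite hyperplane arrangement in ℝⁿ with face poset F(A), and fix a total order ⊣ on the set of chambers C(A) of order type ω (or finite). Define S(C) to be the set of Salvetti cells ⟨C',F⟩ with C' = C.F, and N(C) the set of cells of S(C) not lying in any S(C'') with C'' ⊣ C. If ⊣ is a valid order, i.e. for every chamber C the upper ideal J(C) = { X ∈ L(A) : supp(X) ∩ s(C,C') ≠ ∅ for all C' ⊣ C } of the intersection poset is principal, generated by X_C = |F_C| for a face F_C of C, then N(C) = { ⟨D,F⟩ ∈ S(C) : F ⊆ X_C }. -/

import Mathlib

open Metric Set MeasureTheory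

noncomputable section

/-- A locally finite arrangement of affine hyperplanes in ℝⁿ, given by affine
equations `⟪a i, x⟫ = b i` with `a i ≠ 0`, indexed injectively by `ι`. -/
structure Arrangement (n : ℕ) (ι : Type) where
  a : ι → EuclideanSpace ℝ (Fin n)
  b : ι → ℝ
  ha : ∀ i, a i ≠ 0
  inj : Function.Injective fun i => {x : EuclideanSpace ℝ (Fin n) | (inner ℝ (a i) x : ℝ) = b i}
  locFin : ∀ x : EuclideanSpace ℝ (Fin n), ∃ ε > 0,
    {i : ι | ∃ y ∈ Metric.ball x ε, (inner ℝ (a i) y : ℝ) = b i}.Finite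

namespace Arrangement

variable {n : ℕ} {ι : Type} (A : Arrangement n ι)

/-- The defining affine functional of the `i`-th hyperplane. -/
def val (i : ι) (x : EuclideanSpace ℝ (Fin n)) : ℝ := (inner ℝ (A.a i) x : ℝ) - A.b i

/-- The `i`-th hyperplane. -/
def hyperplane (i : ι) : Set (EuclideanSpace ℝ (Fin n)) := {x | A.val i x = 0}

/-- The sign vector of a point. -/
def signAt (x : EuclideanSpace ℝ (Fin n)) : ι → SignType := fun i => SignType.sign (A.val i x)

/-- The (relatively open) stratum with sign vector `σ`. -/
def openCell (σ : ι → SignType) : Set (EuclideanSpace ℝ (Fin n)) :=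
  {x | ∀ i, SignType.sign (A.val i x) = σ i}

/-- The (closed) faces of the arrangement: closures of the strata. -/
def IsFace (F : Set (EuclideanSpace ℝ (Fin n))) : Prop :=
  ∃ x : EuclideanSpace ℝ (Fin n), F = closure (A.openCell (A.signAt x))

/-- Chambers: closed faces of codimension 0. -/
def IsChamber (C : Set (EuclideanSpace ℝ (Fin n))) : Prop :=
  ∃ x : EuclideanSpace ℝ (Fin n), (∀ i, A.val i x ≠ 0) ∧
    C = closure (A.openCell (A.signAt x))

/-- The support of a subset: the hyperplanes containing it. -/
def supp (U : Set (EuclideanSpace ℝ (Fin n))) : Set ι := {i | U ⊆ A.hyperplane i}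

/-- The set of hyperplanes separating two chambers. -/
def sep (C C' : Set (EuclideanSpace ℝ (Fin n))) : Set ι :=
  {i | ∀ x ∈ interior C, ∀ y ∈ interior C', A.val i x * A.val i y < 0}

/-- `F` is a face of the chamber (or face) `C`. -/
def IsFaceOf (F C : Set (EuclideanSpace ℝ (Fin n))) : Prop := A.IsFace F ∧ F ⊆ C

/-- `A.IsCF C F D` means `D = C.F`: `D` is the unique chamber containing `F` and not
separated from `C` by any hyperplane of `supp F`. -/
def IsCF (C F D : Set (EuclideanSpace ℝ (Fin n))) : Prop :=
  A.IsChamber D ∧ F ⊆ D ∧ A.sep C D ∩ A.supp F = ∅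

/-- `A.IsOpp D F E` means `E = D^F`: `E` is the chamber opposite to `D` with respect to
its face `F`, i.e. the hyperplanes separating `D` and `E` are exactly those containing `F`. -/
def IsOpp (D F E : Set (EuclideanSpace ℝ (Fin n))) : Prop :=
  A.IsChamber E ∧ F ⊆ E ∧ A.sep D E = A.supp F

/-- Flats: nonempty intersections of subfamilies of hyperplanes (including ℝⁿ itself). -/
def IsFlat (X : Set (EuclideanSpace ℝ (Fin n))) : Prop :=
  X.Nonempty ∧ ∃ s : Set ι, X = ⋂ i ∈ s, A.hyperplane i

/-- A cell `⟨C, F⟩` of the Salvetti complex: a chamber `C` together with a face `F` of `C`. -/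
structure Cell {n : ℕ} {ι : Type} (𝒜 : Arrangement n ι) where
  C : Set (EuclideanSpace ℝ (Fin n))
  F : Set (EuclideanSpace ℝ (Fin n))
  isChamber : 𝒜.IsChamber C
  isFace : 𝒜.IsFace F
  faceLe : F ⊆ C

/-- The Salvetti order: `⟨C,F⟩ ≤ ⟨D,G⟩` iff `F ⪯ G` (i.e. `F ⊇ G`) and `D.F = C`. -/
def cellLE (c d : A.Cell) : Prop := d.F ⊆ c.F ∧ A.IsCF d.C c.F c.C

/-- The subcomplex `S(C)`: cells `⟨D,F⟩` with `D = C.F`. -/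
def inS (C : Set (EuclideanSpace ℝ (Fin n))) (c : A.Cell) : Prop := A.IsCF C c.F c.C

/-- A strict total order on the chambers. -/
def IsChamberOrder (lt : Set (EuclideanSpace ℝ (Fin n)) → Set (EuclideanSpace ℝ (Fin n)) → Prop) :
    Prop :=
  (∀ C C', A.IsChamber C → A.IsChamber C' → C ≠ C' → lt C C' ∨ lt C' C) ∧
  (∀ C, ¬ lt C C) ∧
  (∀ C C' C'', lt C C' → lt C' C'' → lt C C'')

/-- The upper ideal `J(C)` of the poset of flats determined by a total order on chambers. -/
def J (lt : Set (EuclideanSpace ℝ (Fin n)) → Set (EuclideanSpace ℝ (Fin n)) → Prop)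
    (C : Set (EuclideanSpace ℝ (Fin n))) : Set (Set (EuclideanSpace ℝ (Fin n))) :=
  {X | A.IsFlat X ∧ ∀ C', A.IsChamber C' → lt C' C → (A.supp X ∩ A.sep C C').Nonempty}

/-- A valid order: for each chamber `C`, the ideal `J(C)` is the principal upper ideal
(in the poset of flats ordered by reverse inclusion) generated by `X_C = |F_C|` for some
face `F_C` of `C`. -/
def IsValidOrder
    (lt : Set (EuclideanSpace ℝ (Fin n)) → Set (EuclideanSpace ℝ (Fin n)) → Prop) : Prop :=
  A.IsChamberOrder lt ∧
  ∀ C, A.IsChamber C → ∃ F_C, A.IsFaceOf F_C C ∧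
    A.J lt C = {X | A.IsFlat X ∧ X ⊆ (affineSpan ℝ F_C : Set (EuclideanSpace ℝ (Fin n)))}

/-- Membership in `N(C)`: cells of `S(C)` not lying in any earlier `S(C')`. -/
def inN (lt : Set (EuclideanSpace ℝ (Fin n)) → Set (EuclideanSpace ℝ (Fin n)) → Prop)
    (C : Set (EuclideanSpace ℝ (Fin n))) (c : A.Cell) : Prop :=
  A.inS C c ∧ ∀ C', A.IsChamber C' → lt C' C → ¬ A.inS C' c

/-- A point `x₀` is generic with respect to `A`: (i) chambers at equal distance from `x₀`
have the same metric projection of `x₀`, lying in their intersection; (ii) distances to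
strictly comparable flats are strictly comparable. -/
def IsGeneric (x₀ : EuclideanSpace ℝ (Fin n)) : Prop :=
  (∀ C C', A.IsChamber C → A.IsChamber C' → infDist x₀ C = infDist x₀ C' →
    ∀ p ∈ C, ∀ p' ∈ C', (∀ q ∈ C, dist x₀ p ≤ dist x₀ q) →
      (∀ q ∈ C', dist x₀ p' ≤ dist x₀ q) → p = p' ∧ p ∈ C ∩ C') ∧
  (∀ L L', A.IsFlat L → A.IsFlat L' → L' ⊂ L → infDist x₀ L < infDist x₀ L')

end Arrangement

section AuxLemmas

private theorem sign_mul_pos' {a b : ℝ} (h : 0 < a * b) : SignType.sign a = SignType.sign b := by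
  rcases lt_trichotomy a 0 with ha|ha|ha
  · have hb : b < 0 := by nlinarith
    rw [sign_neg ha, sign_neg hb]
  · rw [ha, zero_mul] at h; exact absurd h (lt_irrefl 0)
  · have hb : 0 < b := by nlinarith
    rw [sign_pos ha, sign_pos hb]

private theorem mul_neg_of_sign_ne' {a b : ℝ} (ha : a ≠ 0) (hb : b ≠ 0)
    (h : SignType.sign a ≠ SignType.sign b) : a * b < 0 := by
  rcases ha.lt_or_gt with ha'|ha' <;> rcases hb.lt_or_gt with hb'|hb'
  · exact absurd (by rw [sign_neg ha', sign_neg hb']) h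
  · exact mul_neg_of_neg_of_pos ha' hb'
  · exact mul_neg_of_pos_of_neg ha' hb'
  · exact absurd (by rw [sign_pos ha', sign_pos hb']) h

private theorem sign_ne_of_mul_neg' {a b : ℝ} (h : a * b < 0) :
    SignType.sign a ≠ SignType.sign b := by
  intro he
  rcases lt_trichotomy a 0 with ha|ha|ha
  · rcases lt_trichotomy b 0 with hb|hb|hb
    · nlinarith
    · rw [hb, sign_neg ha, sign_zero] at he; exact absurd he (by decide)
    · rw [sign_neg ha, sign_pos hb] at he; exact absurd he (by decide)
  · rw [ha, zero_mul] at h; exact absurd h (lt_irrefl 0)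
  · rcases lt_trichotomy b 0 with hb|hb|hb
    · rw [sign_pos ha, sign_neg hb] at he; exact absurd he (by decide)
    · rw [hb, sign_pos ha, sign_zero] at he; exact absurd he (by decide)
    · nlinarith

private theorem sign_eq_of_abs_lt' {a b : ℝ} (h : |b - a| < |a|) :
    SignType.sign b = SignType.sign a := by
  obtain ⟨h1, h2⟩ := abs_lt.1 h
  rcases lt_trichotomy a 0 with ha|ha|ha
  · rw [abs_of_neg ha] at h1 h2
    rw [sign_neg ha, sign_neg (by linarith : b < 0)]
  · rw [ha, sub_zero, abs_zero] at h; exact absurd (abs_nonneg b) (not_le.2 h)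
  · rw [abs_of_pos ha] at h1 h2
    rw [sign_pos ha, sign_pos (by linarith : 0 < b)]

private theorem mul_neg_transfer' {a b c : ℝ} (ha : a ≠ 0) (hc : c ≠ 0)
    (h1 : ¬ a * c < 0) (h2 : b * c < 0) : a * b < 0 := by
  rcases ha.lt_or_gt with h|h <;> rcases hc.lt_or_gt with h'|h'
  · have hb : 0 < b := by nlinarith
    exact mul_neg_of_neg_of_pos h hb
  · exact absurd (mul_neg_of_neg_of_pos h h') h1
  · exact absurd (mul_neg_of_pos_of_neg h h') h1
  · have hb : b < 0 := by nlinarith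
    exact mul_neg_of_pos_of_neg h hb

private theorem combo_pos' {v w s t : ℝ} (hv : 0 < v) (hw : 0 < w) (hs : 0 ≤ s) (ht : 0 ≤ t)
    (hst : s + t = 1) : 0 < s * v + t * w := by
  rcases hs.eq_or_lt with h|h
  · rw [← h, zero_mul, zero_add]
    have ht1 : t = 1 := by linarith
    rw [ht1, one_mul]; exact hw
  · have h1 : 0 ≤ t * w := mul_nonneg ht hw.le
    nlinarith [mul_pos h hv]

private theorem combo_neg' {v w s t : ℝ} (hv : v < 0) (hw : w < 0) (hs : 0 ≤ s) (ht : 0 ≤ t)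
    (hst : s + t = 1) : s * v + t * w < 0 := by
  have := combo_pos' (neg_pos.2 hv) (neg_pos.2 hw) hs ht hst
  nlinarith

private theorem exists_pos_le_finset' {α : Type*} (T : Finset α) (f : α → ℝ)
    (hf : ∀ i ∈ T, 0 < f i) : ∃ δ > 0, ∀ i ∈ T, δ ≤ f i := by
  classical
  rcases T.eq_empty_or_nonempty with h|h
  · exact ⟨1, one_pos, by simp [h]⟩
  · exact ⟨T.inf' h f, (Finset.lt_inf'_iff h).2 hf, fun i hi => Finset.inf'_le _ hi⟩

end AuxLemmas

namespace Arrangement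

variable {n : ℕ} {ι : Type} (A : Arrangement n ι)

theorem val_continuous (i : ι) : Continuous (A.val i) := by
  unfold val
  exact (continuous_const.inner continuous_id).sub continuous_const

theorem val_combo (i : ι) (y z : EuclideanSpace ℝ (Fin n)) (s t : ℝ) (hst : s + t = 1) :
    A.val i (s • y + t • z) = s * A.val i y + t * A.val i z := by
  unfold val
  rw [inner_add_right, real_inner_smul_right, real_inner_smul_right]
  linear_combination A.b i * hst

theorem mem_openCell_self (x : EuclideanSpace ℝ (Fin n)) :
    x ∈ A.openCell (A.signAt x) := fun _ => rfl

theorem hyperplane_closed (i : ι) : IsClosed (A.hyperplane i) :=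
  isClosed_eq (A.val_continuous i) continuous_const

theorem face_subset_hyperplane {x : EuclideanSpace ℝ (Fin n)} {i : ι} (h : A.val i x = 0) :
    closure (A.openCell (A.signAt x)) ⊆ A.hyperplane i := by
  apply closure_minimal _ (A.hyperplane_closed i)
  intro y hy
  have h1 : SignType.sign (A.val i y) = SignType.sign (A.val i x) := hy i
  show A.val i y = 0
  apply sign_eq_zero_iff.1
  rw [h1, h, sign_zero]

theorem supp_face (x : EuclideanSpace ℝ (Fin n)) :
    A.supp (closure (A.openCell (A.signAt x))) = {i | A.val i x = 0} := by
  ext i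
  constructor
  · intro h
    exact h (subset_closure (A.mem_openCell_self x))
  · exact fun h => A.face_subset_hyperplane h

theorem sign_const (i : ι) {s : Set (EuclideanSpace ℝ (Fin n))} (hs : IsPreconnected s)
    (hne : ∀ y ∈ s, A.val i y ≠ 0) {x y : EuclideanSpace ℝ (Fin n)}
    (hx : x ∈ s) (hy : y ∈ s) :
    SignType.sign (A.val i y) = SignType.sign (A.val i x) := by
  by_contra h
  have hvx := hne x hx
  have hvy := hne y hy
  have h0 : (0:ℝ) ∈ A.val i '' s := by
    rcases hvx.lt_or_gt with h1|h1 <;> rcases hvy.lt_or_gt with h2|h2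
    · exact absurd (by rw [sign_neg h2, sign_neg h1]) h
    · exact hs.intermediate_value hx hy ((A.val_continuous i).continuousOn) ⟨h1.le, h2.le⟩
    · exact hs.intermediate_value hy hx ((A.val_continuous i).continuousOn) ⟨h2.le, h1.le⟩
    · exact absurd (by rw [sign_pos h2, sign_pos h1]) h
  obtain ⟨z, hz, hz0⟩ := h0
  exact hne z hz hz0

theorem openCell_convex (σ : ι → SignType) : Convex ℝ (A.openCell σ) := by
  intro y hy z hz s t hs ht hst
  intro i
  rw [A.val_combo i y z s t hst]
  have hy' := hy i
  have hz' := hz i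
  rcases hσ : σ i with _|_|_
  · rw [hσ] at hy' hz'
    rw [sign_eq_zero_iff.1 hy', sign_eq_zero_iff.1 hz', mul_zero, mul_zero, add_zero, sign_zero]
    rfl
  · rw [hσ] at hy' hz'
    have h1 : A.val i y < 0 := sign_eq_neg_one_iff.1 hy'
    have h2 : A.val i z < 0 := sign_eq_neg_one_iff.1 hz'
    exact sign_neg (combo_neg' h1 h2 hs ht hst)
  · rw [hσ] at hy' hz'
    have h1 : 0 < A.val i y := sign_eq_one_iff.1 hy'
    have h2 : 0 < A.val i z := sign_eq_one_iff.1 hz'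
    exact sign_pos (combo_pos' h1 h2 hs ht hst)

theorem openCell_isOpen {x : EuclideanSpace ℝ (Fin n)} (hx : ∀ i, A.val i x ≠ 0) :
    IsOpen (A.openCell (A.signAt x)) := by
  rw [Metric.isOpen_iff]
  intro y hy
  obtain ⟨ε, hε, hfin⟩ := A.locFin y
  classical
  have hyval : ∀ i, A.val i y ≠ 0 := by
    intro i h0
    apply hx i
    have h1 : SignType.sign (A.val i y) = SignType.sign (A.val i x) := hy i
    apply sign_eq_zero_iff.1
    rw [← h1, h0, sign_zero]
  set U : Set (EuclideanSpace ℝ (Fin n)) :=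
    Metric.ball y ε ∩ ⋂ i ∈ hfin.toFinset, {z | 0 < A.val i y * A.val i z} with hU
  have hUopen : IsOpen U := by
    apply IsOpen.inter Metric.isOpen_ball
    apply isOpen_biInter_finset
    intro i _
    exact isOpen_lt continuous_const (continuous_const.mul (A.val_continuous i))
  have hyU : y ∈ U := by
    refine ⟨Metric.mem_ball_self hε, ?_⟩
    apply Set.mem_iInter₂.2
    intro i _
    exact mul_self_pos.2 (hyval i)
  have hUsub : U ⊆ A.openCell (A.signAt y) := by
    rintro z ⟨hzball, hzI⟩
    intro i
    by_cases hiS : i ∈ hfin.toFinset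
    · have := Set.mem_iInter₂.1 hzI i hiS
      exact (sign_mul_pos' this).symm
    · have hne : ∀ w ∈ Metric.ball y ε, A.val i w ≠ 0 := by
        intro w hw h0
        apply hiS
        rw [Set.Finite.mem_toFinset]
        exact ⟨w, hw, by simpa [Arrangement.val, sub_eq_zero] using h0⟩
      exact A.sign_const i (convex_ball y ε).isPreconnected hne
        (Metric.mem_ball_self hε) hzball
  obtain ⟨δ, hδ, hδsub⟩ := Metric.isOpen_iff.1 hUopen y hyU
  refine ⟨δ, hδ, fun z hz => ?_⟩
  intro i
  show SignType.sign (A.val i z) = A.signAt x i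
  have h1 : SignType.sign (A.val i z) = SignType.sign (A.val i y) := hUsub (hδsub hz) i
  rw [h1]
  exact hy i

theorem interior_closure_chamber {x : EuclideanSpace ℝ (Fin n)} (hx : ∀ i, A.val i x ≠ 0) :
    interior (closure (A.openCell (A.signAt x))) = A.openCell (A.signAt x) := by
  apply Set.Subset.antisymm
  · intro z hz
    obtain ⟨ε, hε, hball⟩ := Metric.isOpen_iff.1 isOpen_interior z hz
    set t : ℝ := ε / (2 * (‖z - x‖ + 1)) with ht
    have htpos : 0 < t := by positivity
    have hy : z + t • (z - x) ∈ closure (A.openCell (A.signAt x)) := by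
      apply interior_subset
      apply hball
      rw [Metric.mem_ball, dist_eq_norm]
      have he : z + t • (z - x) - z = t • (z - x) := by abel
      rw [he, norm_smul, Real.norm_eq_abs, abs_of_pos htpos]
      have hd : (0:ℝ) < ‖z - x‖ + 1 := by positivity
      calc t * ‖z - x‖ < t * (‖z - x‖ + 1) := by nlinarith
        _ = ε / 2 := by rw [ht]; field_simp
        _ < ε := by linarith
    have hxint : x ∈ interior (A.openCell (A.signAt x)) := by
      rw [(A.openCell_isOpen hx).interior_eq]
      exact A.mem_openCell_self x
    have hcombo := (A.openCell_convex (A.signAt x)).combo_interior_closure_mem_interior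
      hxint hy (a := t/(1+t)) (b := 1/(1+t)) (by positivity) (by positivity)
      (by rw [← add_div, add_comm t 1, div_self (ne_of_gt (by positivity : (0:ℝ) < 1 + t))])
    have hzeq : z = (t/(1+t)) • x + (1/(1+t)) • (z + t • (z - x)) := by
      have h1t : (1 + t) ≠ 0 := by positivity
      match_scalars <;> field_simp <;> ring
    rw [← hzeq] at hcombo
    exact interior_subset hcombo
  · exact (A.openCell_isOpen hx).subset_interior_iff.mpr subset_closure

theorem mem_sep_iff {x y : EuclideanSpace ℝ (Fin n)} (hx : ∀ j, A.val j x ≠ 0)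
    (hy : ∀ j, A.val j y ≠ 0) (i : ι) :
    i ∈ A.sep (closure (A.openCell (A.signAt x))) (closure (A.openCell (A.signAt y))) ↔
      A.val i x * A.val i y < 0 := by
  constructor
  · intro h
    exact h x (by rw [A.interior_closure_chamber hx]; exact A.mem_openCell_self x)
             y (by rw [A.interior_closure_chamber hy]; exact A.mem_openCell_self y)
  · intro h u hu v hv
    rw [A.interior_closure_chamber hx] at hu
    rw [A.interior_closure_chamber hy] at hv
    have h1 : SignType.sign (A.val i u) = SignType.sign (A.val i x) := hu i
    have h2 : SignType.sign (A.val i v) = SignType.sign (A.val i y) := hv i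
    have hune : A.val i u ≠ 0 := fun h0 => (hx i) (sign_eq_zero_iff.1 (by rw [← h1, h0, sign_zero]))
    have hvne : A.val i v ≠ 0 := fun h0 => (hy i) (sign_eq_zero_iff.1 (by rw [← h2, h0, sign_zero]))
    apply mul_neg_of_sign_ne' hune hvne
    rw [h1, h2]
    exact sign_ne_of_mul_neg' h

theorem flat_subset_affineSpan (x : EuclideanSpace ℝ (Fin n)) :
    (⋂ i ∈ {i | A.val i x = 0}, A.hyperplane i) ⊆
      (affineSpan ℝ (closure (A.openCell (A.signAt x))) : Set (EuclideanSpace ℝ (Fin n))) := by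
  intro z hz
  have hz' : ∀ i, A.val i x = 0 → A.val i z = 0 := fun i hi => Set.mem_iInter₂.1 hz i hi
  obtain ⟨ε, hε, hfin⟩ := A.locFin x
  classical
  set T : Finset ι := hfin.toFinset.filter (fun i => A.val i x ≠ 0) with hT
  obtain ⟨δ, hδ, hδle⟩ := exists_pos_le_finset' T
      (fun i => |A.val i x| / (|A.val i x| + |A.val i z| + 1)) (by
    intro i hi
    have : A.val i x ≠ 0 := (Finset.mem_filter.1 hi).2
    have h1 : 0 < |A.val i x| := abs_pos.2 this
    positivity)
  set t : ℝ := min δ (ε / (2 * (‖z - x‖ + 1))) with htdef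
  have htpos : 0 < t := lt_min hδ (by positivity)
  set w : EuclideanSpace ℝ (Fin n) := x + t • (z - x) with hw
  have hwball : w ∈ Metric.ball x ε := by
    rw [Metric.mem_ball, dist_eq_norm]
    have he : w - x = t • (z - x) := by rw [hw]; abel
    rw [he, norm_smul, Real.norm_eq_abs, abs_of_pos htpos]
    have h1 : t ≤ ε / (2 * (‖z - x‖ + 1)) := min_le_right _ _
    have hd : (0:ℝ) < ‖z - x‖ + 1 := by positivity
    calc t * ‖z - x‖ ≤ (ε / (2 * (‖z - x‖ + 1))) * (‖z - x‖ + 1) := by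
          nlinarith [norm_nonneg (z - x)]
      _ = ε / 2 := by field_simp
      _ < ε := by linarith
  have hwval : ∀ i, A.val i w = (1 - t) * A.val i x + t * A.val i z := by
    intro i
    have he : w = (1 - t) • x + t • z := by rw [hw]; module
    rw [he, A.val_combo i x z (1 - t) t (by ring)]
  have hwcell : w ∈ A.openCell (A.signAt x) := by
    intro i
    show SignType.sign (A.val i w) = SignType.sign (A.val i x)
    by_cases h0 : A.val i x = 0
    · rw [hwval i, h0, hz' i h0, mul_zero, mul_zero, add_zero]
    · by_cases hiS : i ∈ hfin.toFinset
      · have hiT : i ∈ T := Finset.mem_filter.2 ⟨hiS, h0⟩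
        apply sign_eq_of_abs_lt'
        rw [hwval i]
        have he : (1 - t) * A.val i x + t * A.val i z - A.val i x
            = t * (A.val i z - A.val i x) := by ring
        rw [he, abs_mul, abs_of_pos htpos]
        have h1 : t ≤ |A.val i x| / (|A.val i x| + |A.val i z| + 1) :=
          le_trans (min_le_left _ _) (hδle i hiT)
        have habs : |A.val i z - A.val i x| ≤ |A.val i z| + |A.val i x| := abs_sub _ _
        have hx0 : 0 < |A.val i x| := abs_pos.2 h0
        have hden : 0 < |A.val i x| + |A.val i z| + 1 := by positivity
        calc t * |A.val i z - A.val i x|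
            ≤ (|A.val i x| / (|A.val i x| + |A.val i z| + 1)) * (|A.val i z| + |A.val i x|) :=
              mul_le_mul h1 habs (abs_nonneg _) (by positivity)
          _ < |A.val i x| := by
              rw [div_mul_eq_mul_div, div_lt_iff₀ hden]
              nlinarith [abs_nonneg (A.val i z)]
      · have hne : ∀ w' ∈ Metric.ball x ε, A.val i w' ≠ 0 := by
          intro w' hw' h0'
          apply hiS
          rw [Set.Finite.mem_toFinset]
          exact ⟨w', hw', by simpa [Arrangement.val, sub_eq_zero] using h0'⟩
        exact A.sign_const i (convex_ball x ε).isPreconnected hne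
          (Metric.mem_ball_self hε) hwball
  have hxmem : x ∈ affineSpan ℝ (closure (A.openCell (A.signAt x))) :=
    subset_affineSpan ℝ _ (subset_closure (A.mem_openCell_self x))
  have hwmem : w ∈ affineSpan ℝ (closure (A.openCell (A.signAt x))) :=
    subset_affineSpan ℝ _ (subset_closure hwcell)
  have hmem := AffineSubspace.smul_vsub_vadd_mem
    (affineSpan ℝ (closure (A.openCell (A.signAt x)))) (1/t) hwmem hxmem hxmem
  have hzeq : (1/t) • (w -ᵥ x) +ᵥ x = z := by
    show (1/t) • (w - x) + x = z
    rw [hw]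
    have he : x + t • (z - x) - x = t • (z - x) := by abel
    rw [he, smul_smul, one_div, inv_mul_cancel₀ (ne_of_gt htpos), one_smul]
    abel
  rwa [hzeq] at hmem

end Arrangement

/-- For a valid order `⊣`, `N(C) = { ⟨D,F⟩ ∈ S(C) : F ⊆ X_C }`. -/
theorem stmt7 {n : ℕ} {ι : Type} (A : Arrangement n ι)
    (lt : Set (EuclideanSpace ℝ (Fin n)) → Set (EuclideanSpace ℝ (Fin n)) → Prop)
    (hω : ∀ C, A.IsChamber C → {C' | A.IsChamber C' ∧ lt C' C}.Finite)
    (hvalid : A.IsValidOrder lt)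
    (C F_C : Set (EuclideanSpace ℝ (Fin n)))
    (hC : A.IsChamber C) (hFC : A.IsFaceOf F_C C)
    (hJ : A.J lt C =
      {X | A.IsFlat X ∧ X ⊆ (affineSpan ℝ F_C : Set (EuclideanSpace ℝ (Fin n)))}) :
    ∀ c : A.Cell, A.inN lt C c ↔
      A.inS C c ∧ c.F ⊆ (affineSpan ℝ F_C : Set (EuclideanSpace ℝ (Fin n))) := by
  classical
  obtain ⟨x, hxne, hxC⟩ := hC
  intro c
  obtain ⟨xc, hxcne, hxcC⟩ := c.isChamber
  obtain ⟨xf, hxfF⟩ := c.isFace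
  have hsupp : A.supp c.F = {i | A.val i xf = 0} := by rw [hxfF]; exact A.supp_face xf
  set X : Set (EuclideanSpace ℝ (Fin n)) := ⋂ i ∈ A.supp c.F, A.hyperplane i with hX
  have hFX : c.F ⊆ X := Set.subset_iInter₂ fun i hi => hi
  have hsuppX : A.supp X = A.supp c.F := by
    apply Set.Subset.antisymm
    · intro i hi
      exact hFX.trans hi
    · intro i hi
      exact Set.biInter_subset_of_mem hi
  have hXflat : A.IsFlat X := by
    refine ⟨⟨xf, ?_⟩, A.supp c.F, rfl⟩
    apply Set.mem_iInter₂.2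
    intro i hi
    rw [hsupp] at hi
    exact hi
  have hnotS : ∀ C', A.IsChamber C' → ¬ A.inS C' c → (A.sep C' c.C ∩ A.supp c.F).Nonempty := by
    intro C' _ hns
    rw [Set.nonempty_iff_ne_empty]
    intro hemp
    exact hns ⟨⟨xc, hxcne, hxcC⟩, c.faceLe, hemp⟩
  constructor
  · rintro ⟨hS, hN⟩
    refine ⟨hS, ?_⟩
    have hXJ : X ∈ A.J lt C := by
      refine ⟨hXflat, ?_⟩
      intro C' hC' hlt
      obtain ⟨i, hisep, hisupp⟩ := hnotS C' hC' (hN C' hC' hlt)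
      refine ⟨i, ?_, ?_⟩
      · rw [hsuppX]; exact hisupp
      · obtain ⟨x', hx'ne, hx'C⟩ := hC'
        have hnot : i ∉ A.sep C c.C := by
          intro h
          have hemp := hS.2.2
          have : i ∈ A.sep C c.C ∩ A.supp c.F := ⟨h, hisupp⟩
          rw [hemp] at this
          exact Set.notMem_empty i this
        rw [hxC, hxcC, A.mem_sep_iff hxne hxcne] at hnot
        rw [hx'C, hxcC, A.mem_sep_iff hx'ne hxcne] at hisep
        rw [hxC, hx'C, A.mem_sep_iff hxne hx'ne]
        exact mul_neg_transfer' (hxne i) (hxcne i) hnot hisep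
    rw [hJ] at hXJ
    exact hFX.trans hXJ.2
  · rintro ⟨hS, hFspan⟩
    refine ⟨hS, ?_⟩
    intro C' hC' hlt hns
    have h1 : X ⊆ (affineSpan ℝ c.F : Set (EuclideanSpace ℝ (Fin n))) := by
      rw [hX, hsupp, hxfF]
      exact A.flat_subset_affineSpan xf
    have h2 : affineSpan ℝ c.F ≤ affineSpan ℝ F_C := affineSpan_le.mpr hFspan
    have hXmem : X ∈ A.J lt C := by
      rw [hJ]
      exact ⟨hXflat, fun z hz => h2 (h1 hz)⟩
    obtain ⟨i, hisuppX, hisep⟩ := hXmem.2 C' hC' hlt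
    rw [hsuppX] at hisuppX
    obtain ⟨x', hx'ne, hx'C⟩ := hC'
    have hnot : i ∉ A.sep C c.C := by
      intro h
      have hemp := hS.2.2
      have : i ∈ A.sep C c.C ∩ A.supp c.F := ⟨h, hisuppX⟩
      rw [hemp] at this
      exact Set.notMem_empty i this
    rw [hxC, hxcC, A.mem_sep_iff hxne hxcne] at hnot
    rw [hxC, hx'C, A.mem_sep_iff hxne hx'ne] at hisep
    have hfin : A.val i x' * A.val i xc < 0 := by
      have hnot' : ¬ A.val i xc * A.val i x < 0 := by rwa [mul_comm] at hnot
      have hisep' : A.val i x' * A.val i x < 0 := by rwa [mul_comm] at hisep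
      have := mul_neg_transfer' (hxcne i) (hxne i) hnot' hisep'
      rwa [mul_comm] at this
    have hmem : i ∈ A.sep C' c.C := by
      rw [hx'C, hxcC, A.mem_sep_iff hx'ne hxcne]
      exact hfin
    have hemp := hns.2.2
    have : i ∈ A.sep C' c.C ∩ A.supp c.F := ⟨hmem, hisuppX⟩
    rw [hemp] at this
    exact Set.notMem_empty i this
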